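/- The vertex separation number of a graph equals the minimum over all path-decompositions of (max bag size minus one); i.e., for every graph G, min over orderings f of max_v pw_f(v) equals the pathwidth of G defined via path-decompositions. -/

import Mathlib

def IsPathDecomp {V : Type*} (G : SimpleGraph V) (ℓ : ℕ) (X : Fin ℓ → Set V) : Prop :=
  (∀ u w, G.Adj u w → ∃ i, u ∈ X i ∧ w ∈ X i) ∧
  ∀ i j k : Fin ℓ, i ≤ j → j ≤ k → X i ∩ X k ⊆ X j

noncomputable def pwG {V : Type*} (G : SimpleGraph V) : ℕ :=
  sInf {n | ∃ ℓ : ℕ, ∃ X : Fin ℓ → Set V, IsPathDecomp G ℓ X ∧ ∀ i, (X i).ncard ≤ n + 1}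

/-- Direction 1: pathwidth is at most the vertex separation of any ordering. -/
lemma pw_le_vs_aux {V : Type*} [Fintype V] (G : SimpleGraph V)
    (f : V ≃ Fin (Fintype.card V)) :
    pwG G ≤ ⨆ v : V, {u : V | f u ≤ f v ∧ ∃ w, G.Adj u w ∧ f v < f w}.ncard := by
  apply Nat.sInf_le
  refine ⟨Fintype.card V,
    fun i => {u | f u = i ∨ (f u < i ∧ ∃ w, G.Adj u w ∧ i ≤ f w)}, ⟨?_, ?_⟩, ?_⟩
  · -- covers all edges
    intro u w huw
    rcases lt_or_gt_of_ne (fun h => huw.ne (f.injective h)) with h | h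
    · exact ⟨f w, Or.inr ⟨h, w, huw, le_refl _⟩, Or.inl rfl⟩
    · exact ⟨f u, Or.inl rfl, Or.inr ⟨h, u, huw.symm, le_refl _⟩⟩
  · -- interval property
    intro i j k hij hjk u hu
    obtain ⟨h1, h2⟩ := hu
    have hule_i : f u ≤ i := by rcases h1 with h | ⟨h, _⟩ <;> [exact le_of_eq h; exact le_of_lt h]
    have hule_j : f u ≤ j := le_trans hule_i hij
    rcases h2 with h | ⟨hlt, w, hadj, hle⟩
    · -- f u = k, so f u ≤ i ≤ j ≤ k = f u, all equal
      have : f u = j := le_antisymm hule_j (h ▸ hjk)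
      exact Or.inl this
    · by_cases hj : f u = j
      · exact Or.inl hj
      · exact Or.inr ⟨lt_of_le_of_ne hule_j hj, w, hadj, le_trans hjk hle⟩
  · -- bag sizes
    intro i
    set S : Set V := {u | f u < i ∧ ∃ w, G.Adj u w ∧ i ≤ f w} with hS
    have hsub : {u | f u = i ∨ (f u < i ∧ ∃ w, G.Adj u w ∧ i ≤ f w)}
        ⊆ insert (f.symm i) S := by
      intro u hu
      rcases hu with h | h
      · left; exact (Equiv.symm_apply_eq f).mpr h.symm ▸ rfl
      · right; exact h
    have h1 : {u | f u = i ∨ (f u < i ∧ ∃ w, G.Adj u w ∧ i ≤ f w)}.ncard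
        ≤ S.ncard + 1 := by
      calc _ ≤ (insert (f.symm i) S).ncard := Set.ncard_le_ncard hsub (Set.toFinite _)
        _ ≤ S.ncard + 1 := Set.ncard_insert_le _ _
    have h2 : S.ncard ≤ ⨆ v : V, {u : V | f u ≤ f v ∧ ∃ w, G.Adj u w ∧ f v < f w}.ncard := by
      by_cases hi0 : (i : ℕ) = 0
      · have : S = ∅ := by
          ext u; simp only [hS, Set.mem_setOf_eq, Set.mem_empty_iff_false, iff_false]
          rintro ⟨hlt, _⟩
          rw [Fin.lt_def, hi0] at hlt
          omega
        simp [this]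
      · have hi1 : (i : ℕ) - 1 < Fintype.card V := by
          have := i.isLt; omega
        have hfv : f (f.symm ⟨(i : ℕ) - 1, hi1⟩) = ⟨(i : ℕ) - 1, hi1⟩ := f.apply_symm_apply _
        have hSeq : S = {u : V | f u ≤ f (f.symm ⟨(i : ℕ) - 1, hi1⟩) ∧
            ∃ w, G.Adj u w ∧ f (f.symm ⟨(i : ℕ) - 1, hi1⟩) < f w} := by
          ext u
          simp only [hS, Set.mem_setOf_eq, hfv, Fin.lt_def, Fin.le_def]
          constructor
          · rintro ⟨h1, w, h2, h3⟩
            exact ⟨by omega, w, h2, by omega⟩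
          · rintro ⟨h1, w, h2, h3⟩
            exact ⟨by omega, w, h2, by omega⟩
        rw [hSeq]
        exact le_ciSup (Set.Finite.bddAbove (Set.finite_range
          (fun v : V => {u : V | f u ≤ f v ∧ ∃ w, G.Adj u w ∧ f v < f w}.ncard)))
          (f.symm ⟨(i : ℕ) - 1, hi1⟩)
    exact le_trans h1 (by omega)

/-- Direction 2: some ordering achieves vertex separation at most the pathwidth. -/
lemma vs_le_pw_aux {V : Type*} [Fintype V] (G : SimpleGraph V) :
    ∃ f : V ≃ Fin (Fintype.card V),
      ∀ v : V, {u : V | f u ≤ f v ∧ ∃ w, G.Adj u w ∧ f v < f w}.ncard ≤ pwG G := by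
  have hne : {n | ∃ ℓ : ℕ, ∃ X : Fin ℓ → Set V, IsPathDecomp G ℓ X ∧
      ∀ i, (X i).ncard ≤ n + 1}.Nonempty := by
    refine ⟨Fintype.card V, 1, fun _ => Set.univ, ⟨fun u w _ => ⟨0, trivial, trivial⟩,
      fun _ _ _ _ _ _ _ => trivial⟩, fun i => ?_⟩
    rw [Set.ncard_univ, Nat.card_eq_fintype_card]
    omega
  obtain ⟨ℓ, X, ⟨hcov, hint⟩, hcard⟩ := Nat.sInf_mem hne
  -- key of a vertex: index of first bag containing it (0 if none)
  set key : V → ℕ := fun v => sInf {i | ∃ h : i < ℓ, v ∈ X ⟨i, h⟩} with hkey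
  have hkey_mem : ∀ x (i : Fin ℓ), x ∈ X i →
      ∃ h : key x < ℓ, x ∈ X ⟨key x, h⟩ ∧ key x ≤ (i : ℕ) := by
    intro x i hx
    have hne' : {m | ∃ h : m < ℓ, x ∈ X ⟨m, h⟩}.Nonempty :=
      ⟨(i : ℕ), i.isLt, by simpa using hx⟩
    obtain ⟨h, hx'⟩ := Nat.sInf_mem hne'
    exact ⟨h, hx', Nat.sInf_le ⟨i.isLt, by simpa using hx⟩⟩
  -- sorted ordering
  set e := Fintype.equivFin V with he
  set σ := Tuple.sort (key ∘ e.symm) with hσ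
  refine ⟨e.trans σ.symm, ?_⟩
  set f : V ≃ Fin (Fintype.card V) := e.trans σ.symm with hf
  have hmono : ∀ a b : V, f a ≤ f b → key a ≤ key b := by
    intro a b hab
    have := Tuple.monotone_sort (key ∘ e.symm) hab
    simpa [hf, hσ, Function.comp, Equiv.apply_symm_apply] using this
  intro v
  by_cases hvne : {u : V | f u ≤ f v ∧ ∃ w, G.Adj u w ∧ f v < f w}.Nonempty
  · -- the set of keys of "later neighbours" of vertices in the separation set
    set A : Set ℕ := key '' {w | f v < f w ∧ ∃ u, f u ≤ f v ∧ G.Adj u w} with hA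
    have hAne : A.Nonempty := by
      obtain ⟨u0, hu0le, w0, hadj0, hgt0⟩ := hvne
      exact ⟨key w0, w0, ⟨hgt0, u0, hu0le, hadj0⟩, rfl⟩
    obtain ⟨w0, ⟨hw0gt, u0, hu0le, hadj0⟩, hw0key⟩ := Nat.sInf_mem hAne
    obtain ⟨i0, hu0i, hw0i⟩ := hcov u0 w0 hadj0
    obtain ⟨hw0lt, hw0mem, _⟩ := hkey_mem w0 i0 hw0i
    have hjlt : sInf A < ℓ := hw0key ▸ hw0lt
    have hsub : {u : V | f u ≤ f v ∧ ∃ w, G.Adj u w ∧ f v < f w}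
        ⊆ X ⟨sInf A, hjlt⟩ \ {w0} := by
      rintro u ⟨hule, w, hadj, hwgt⟩
      obtain ⟨i, hui, hwi⟩ := hcov u w hadj
      obtain ⟨hulty, humem, _⟩ := hkey_mem u i hui
      obtain ⟨_, _, hwle⟩ := hkey_mem w i hwi
      have hju : key u ≤ sInf A := by
        rw [← hw0key]
        exact hmono u w0 (le_of_lt (lt_of_le_of_lt hule hw0gt))
      have hjw : sInf A ≤ key w := Nat.sInf_le ⟨w, ⟨hwgt, u, hule, hadj⟩, rfl⟩
      have hji : sInf A ≤ (i : ℕ) := le_trans hjw hwle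
      constructor
      · -- interpolation: u ∈ X ⟨key u⟩ and u ∈ X i, key u ≤ sInf A ≤ i
        refine hint ⟨key u, hulty⟩ ⟨sInf A, hjlt⟩ i ?_ ?_ ⟨humem, hui⟩
        · rw [Fin.le_def]; exact hju
        · rw [Fin.le_def]; exact hji
      · -- u ≠ w0
        intro h
        rw [Set.mem_singleton_iff] at h
        subst h
        exact absurd (lt_of_le_of_lt hule hw0gt) (lt_irrefl _)
    have hw0in : w0 ∈ X ⟨sInf A, hjlt⟩ := by
      have : (⟨sInf A, hjlt⟩ : Fin ℓ) = ⟨key w0, hw0lt⟩ := by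
        simp [hw0key]
      rw [this]; exact hw0mem
    have s1 : {u : V | f u ≤ f v ∧ ∃ w, G.Adj u w ∧ f v < f w}.ncard
        ≤ (X ⟨sInf A, hjlt⟩ \ {w0}).ncard := Set.ncard_le_ncard hsub (Set.toFinite _)
    have s2 : (X ⟨sInf A, hjlt⟩ \ {w0}).ncard = (X ⟨sInf A, hjlt⟩).ncard - 1 :=
      Set.ncard_diff_singleton_of_mem hw0in
    have s3 := hcard ⟨sInf A, hjlt⟩
    rw [s2] at s1
    exact le_trans s1 (Nat.sub_le_iff_le_add.mpr s3)
  · rw [Set.not_nonempty_iff_eq_empty] at hvne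
    simp [hvne]

/-- The vertex separation number (min over orderings of the max vertex
separation) equals the pathwidth defined via path-decompositions. -/
theorem vs_eq_pw {V : Type*} [Fintype V] (G : SimpleGraph V) :
    (⨅ f : V ≃ Fin (Fintype.card V), ⨆ v : V,
        {u : V | f u ≤ f v ∧ ∃ w, G.Adj u w ∧ f v < f w}.ncard) = pwG G := by
  apply le_antisymm
  · obtain ⟨f, hf⟩ := vs_le_pw_aux G
    refine le_trans (ciInf_le (OrderBot.bddBelow _) f) ?_
    cases isEmpty_or_nonempty V with
    | inl h =>
      have : (⨆ v : V, {u : V | f u ≤ f v ∧ ∃ w, G.Adj u w ∧ f v < f w}.ncard) = ⊥ :=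
        ciSup_of_empty _
      rw [this]; exact bot_le
    | inr h => exact ciSup_le hf
  · have : Nonempty (V ≃ Fin (Fintype.card V)) := ⟨Fintype.equivFin V⟩
    exact le_ciInf (fun f => pw_le_vs_aux G f)
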